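/- Let n ≥ 2, let u be a unit vector of the Euclidean space ℝ^n, and let R = { x ∈ ℝ^n : ⟨x, u⟩ = 0 } be the hyperplane orthogonal to u. Let D ⊆ R be compact, convex, with nonempty interior relative to R. Let C₀ and C₁ be nonempty compact convex subsets of the half-space { x : ⟨x, u⟩ ≥ 0 } whose orthogonal projections onto R are both equal to D. Then for every λ ∈ [0, 1], vol((1 − λ)•C₀ + λ•C₁) ≥ (1 − λ)·vol(C₀) + λ·vol(C₁). (The volume is concave, in fact affine-dominated, on this 'canal class' of convex bodies.) -/

import Mathlib

open scoped RealInnerProductSpace Pointwise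
open MeasureTheory Set

theorem slice_ineq {Y : Type*} [AddCommGroup Y] [Module ℝ Y] [TopologicalSpace Y]
    [T1Space Y]
    (A₀ A₁ : Set (ℝ × Y))
    (h0cp : IsCompact A₀) (h1cp : IsCompact A₁)
    (h0cv : Convex ℝ A₀) (h1cv : Convex ℝ A₁)
    (hproj : Prod.snd '' A₀ = Prod.snd '' A₁)
    (l : ℝ) (hl0 : 0 ≤ l) (hl1 : l ≤ 1) (y : Y) :
    ENNReal.ofReal (1 - l) * volume ((fun t => (t, y)) ⁻¹' A₀)
        + ENNReal.ofReal l * volume ((fun t => (t, y)) ⁻¹' A₁)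
      ≤ volume ((fun t => (t, y)) ⁻¹' ((1 - l) • A₀ + l • A₁)) := by
  classical
  set I₀ : Set ℝ := (fun t => (t, y)) ⁻¹' A₀ with hI₀
  set I₁ : Set ℝ := (fun t => (t, y)) ⁻¹' A₁ with hI₁
  by_cases h : I₀.Nonempty
  · -- both slices nonempty
    have hy0 : y ∈ Prod.snd '' A₀ := by
      obtain ⟨t, ht⟩ := h; exact ⟨(t, y), ht, rfl⟩
    have hy1 : y ∈ Prod.snd '' A₁ := hproj ▸ hy0
    have h1 : I₁.Nonempty := by
      obtain ⟨p, hp, hpy⟩ := hy1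
      refine ⟨p.1, ?_⟩
      simp only [hI₁, mem_preimage]
      rw [show (p.1, y) = p from Prod.ext rfl hpy.symm]
      exact hp
    -- compactness of slices
    have slicecp : ∀ (A : Set (ℝ × Y)), IsCompact A → IsCompact ((fun t => (t, y)) ⁻¹' A) := by
      intro A hA
      have hc : IsCompact (A ∩ Prod.snd ⁻¹' {y}) :=
        hA.inter_right (isClosed_singleton.preimage continuous_snd)
      have himg : (fun t => (t, y)) ⁻¹' A = Prod.fst '' (A ∩ Prod.snd ⁻¹' {y}) := by
        ext t
        constructor
        · intro ht; exact ⟨(t, y), ⟨ht, rfl⟩, rfl⟩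
        · rintro ⟨p, ⟨hp, hpy⟩, rfl⟩
          simp only [mem_preimage, mem_singleton_iff] at hpy
          simp only [mem_preimage]
          rw [show (p.1, y) = p from Prod.ext rfl hpy.symm]
          exact hp
      rw [himg]
      exact hc.image continuous_fst
    have hI0cp : IsCompact I₀ := slicecp A₀ h0cp
    have hI1cp : IsCompact I₁ := slicecp A₁ h1cp
    -- convexity of slices
    have comb : ∀ (a b t₁ t₂ : ℝ), a + b = 1 →
        ((a * t₁ + b * t₂, y) : ℝ × Y) = a • (t₁, y) + b • (t₂, y) := by
      intro a b t₁ t₂ hab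
      have : y = a • y + b • y := by rw [← add_smul, hab, one_smul]
      rw [Prod.smul_mk, Prod.smul_mk, Prod.mk_add_mk]
      exact Prod.ext (by simp) this
    have slicecv : ∀ (A : Set (ℝ × Y)), Convex ℝ A → Convex ℝ ((fun t => (t, y)) ⁻¹' A) := by
      intro A hA t₁ h₁ t₂ h₂ a b ha hb hab
      simp only [mem_preimage] at h₁ h₂ ⊢
      rw [smul_eq_mul, smul_eq_mul, comb a b t₁ t₂ hab]
      exact hA h₁ h₂ ha hb hab
    have hI0cv : Convex ℝ I₀ := slicecv A₀ h0cv
    have hI1cv : Convex ℝ I₁ := slicecv A₁ h1cv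
    set m₀ := sInf I₀ with hm0
    set M₀ := sSup I₀ with hM0
    set m₁ := sInf I₁ with hm1
    set M₁ := sSup I₁ with hM1
    have e₀ : I₀ = Icc m₀ M₀ := eq_Icc_of_connected_compact ⟨h, hI0cv.isPreconnected⟩ hI0cp
    have e₁ : I₁ = Icc m₁ M₁ := eq_Icc_of_connected_compact ⟨h1, hI1cv.isPreconnected⟩ hI1cp
    have hle₀ : m₀ ≤ M₀ := by
      obtain ⟨t, ht⟩ := h; rw [e₀] at ht; exact ht.1.trans ht.2
    have hle₁ : m₁ ≤ M₁ := by
      obtain ⟨t, ht⟩ := h1; rw [e₁] at ht; exact ht.1.trans ht.2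
    have hl1' : (0:ℝ) ≤ 1 - l := by linarith
    -- the containment
    have hsub : Icc ((1 - l) * m₀ + l * m₁) ((1 - l) * M₀ + l * M₁)
        ⊆ (fun t => (t, y)) ⁻¹' ((1 - l) • A₀ + l • A₁) := by
      set f : ℝ × ℝ → ℝ := fun p => (1 - l) * p.1 + l * p.2 with hf
      have hT : IsPreconnected (f '' (I₀ ×ˢ I₁)) :=
        ((hI0cv.prod hI1cv).isPreconnected).image f
          (Continuous.continuousOn (by fun_prop))
      have hm0mem : m₀ ∈ I₀ := by rw [e₀]; exact ⟨le_refl _, hle₀⟩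
      have hM0mem : M₀ ∈ I₀ := by rw [e₀]; exact ⟨hle₀, le_refl _⟩
      have hm1mem : m₁ ∈ I₁ := by rw [e₁]; exact ⟨le_refl _, hle₁⟩
      have hM1mem : M₁ ∈ I₁ := by rw [e₁]; exact ⟨hle₁, le_refl _⟩
      have hlow : (1 - l) * m₀ + l * m₁ ∈ f '' (I₀ ×ˢ I₁) :=
        ⟨(m₀, m₁), ⟨hm0mem, hm1mem⟩, rfl⟩
      have hhigh : (1 - l) * M₀ + l * M₁ ∈ f '' (I₀ ×ˢ I₁) :=
        ⟨(M₀, M₁), ⟨hM0mem, hM1mem⟩, rfl⟩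
      refine (hT.Icc_subset hlow hhigh).trans ?_
      rintro x ⟨⟨t₀, t₁⟩, ⟨ht₀, ht₁⟩, rfl⟩
      simp only [mem_preimage, hf]
      rw [comb (1 - l) l t₀ t₁ (by ring)]
      exact add_mem_add (smul_mem_smul_set ht₀) (smul_mem_smul_set ht₁)
    calc ENNReal.ofReal (1 - l) * volume I₀ + ENNReal.ofReal l * volume I₁
        = ENNReal.ofReal ((1 - l) * (M₀ - m₀)) + ENNReal.ofReal (l * (M₁ - m₁)) := by
          rw [e₀, e₁, Real.volume_Icc, Real.volume_Icc,
            ENNReal.ofReal_mul hl1', ENNReal.ofReal_mul hl0]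
      _ = ENNReal.ofReal ((1 - l) * (M₀ - m₀) + l * (M₁ - m₁)) := by
          rw [ENNReal.ofReal_add (mul_nonneg hl1' (by linarith)) (mul_nonneg hl0 (by linarith))]
      _ = volume (Icc ((1 - l) * m₀ + l * m₁) ((1 - l) * M₀ + l * M₁)) := by
          rw [Real.volume_Icc]
          congr 1
          ring
      _ ≤ volume ((fun t => (t, y)) ⁻¹' ((1 - l) • A₀ + l • A₁)) := measure_mono hsub
  · -- I₀ empty, hence I₁ empty
    have hI0e : I₀ = ∅ := not_nonempty_iff_eq_empty.mp h
    have h1e : I₁ = ∅ := by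
      rw [eq_empty_iff_forall_notMem]
      intro t ht
      have : y ∈ Prod.snd '' A₀ := hproj ▸ ⟨(t, y), ht, rfl⟩
      obtain ⟨p, hp, hpy⟩ := this
      have : p.1 ∈ I₀ := by
        simp only [hI₀, mem_preimage]
        rw [show (p.1, y) = p from Prod.ext rfl hpy.symm]
        exact hp
      simp [hI0e] at this
    simp [hI0e, h1e]

theorem core (m : ℕ) (A₀ A₁ : Set (ℝ × (Fin m → ℝ)))
    (h0cp : IsCompact A₀) (h1cp : IsCompact A₁)
    (h0cv : Convex ℝ A₀) (h1cv : Convex ℝ A₁)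
    (hproj : Prod.snd '' A₀ = Prod.snd '' A₁)
    (l : ℝ) (hl0 : 0 ≤ l) (hl1 : l ≤ 1) :
    ENNReal.ofReal (1 - l) * volume A₀ + ENNReal.ofReal l * volume A₁
      ≤ volume ((1 - l) • A₀ + l • A₁) := by
  have hScp : IsCompact ((1 - l) • A₀ + l • A₁) := (h0cp.smul (1 - l)).add (h1cp.smul l)
  have hA₀ : MeasurableSet A₀ := h0cp.isClosed.measurableSet
  have hA₁ : MeasurableSet A₁ := h1cp.isClosed.measurableSet
  have hS : MeasurableSet ((1 - l) • A₀ + l • A₁) := hScp.isClosed.measurableSet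
  have fub : ∀ (A : Set (ℝ × (Fin m → ℝ))), MeasurableSet A →
      volume A = ∫⁻ y, volume ((fun t => (t, y)) ⁻¹' A) := by
    intro A hA
    rw [Measure.volume_eq_prod]
    exact Measure.prod_apply_symm hA
  rw [fub A₀ hA₀, fub A₁ hA₁, fub _ hS]
  rw [← lintegral_const_mul _ (measurable_measure_prodMk_right hA₀),
    ← lintegral_const_mul _ (measurable_measure_prodMk_right hA₁),
    ← lintegral_add_left ((measurable_measure_prodMk_right hA₀).const_mul _)]
  exact lintegral_mono fun y =>
    slice_ineq A₀ A₁ h0cp h1cp h0cv h1cv hproj l hl0 hl1 y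

theorem stmt12 (n : ℕ) (hn : 2 ≤ n) (u : EuclideanSpace ℝ (Fin n)) (hu : ‖u‖ = 1)
    (D : Set (EuclideanSpace ℝ (Fin n))) (hDcp : IsCompact D) (hDcv : Convex ℝ D)
    (hDR : D ⊆ {x : EuclideanSpace ℝ (Fin n) | ⟪x, u⟫ = 0})
    (hDint : ∃ x ∈ D, ∃ ε > (0 : ℝ), ∀ y : EuclideanSpace ℝ (Fin n),
        ⟪y, u⟫ = 0 → ‖y - x‖ < ε → y ∈ D)
    (C₀ C₁ : Set (EuclideanSpace ℝ (Fin n)))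
    (h0ne : C₀.Nonempty) (h1ne : C₁.Nonempty)
    (h0cp : IsCompact C₀) (h1cp : IsCompact C₁)
    (h0cv : Convex ℝ C₀) (h1cv : Convex ℝ C₁)
    (h0side : C₀ ⊆ {x : EuclideanSpace ℝ (Fin n) | 0 ≤ ⟪x, u⟫})
    (h1side : C₁ ⊆ {x : EuclideanSpace ℝ (Fin n) | 0 ≤ ⟪x, u⟫})
    (h0proj : (fun x : EuclideanSpace ℝ (Fin n) => x - ⟪x, u⟫ • u) '' C₀ = D)
    (h1proj : (fun x : EuclideanSpace ℝ (Fin n) => x - ⟪x, u⟫ • u) '' C₁ = D)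
    (l : ℝ) (hl0 : 0 ≤ l) (hl1 : l ≤ 1) :
    ENNReal.ofReal (1 - l) * volume C₀ + ENNReal.ofReal l * volume C₁
      ≤ volume ((1 - l) • C₀ + l • C₁) := by
  classical
  obtain ⟨m, rfl⟩ : ∃ m, n = m + 1 := ⟨n - 1, by omega⟩
  -- orthonormal basis with b 0 = u
  have hfr : Module.finrank ℝ (EuclideanSpace ℝ (Fin (m + 1))) = Fintype.card (Fin (m + 1)) := by
    simp [finrank_euclideanSpace_fin]
  have horth : Orthonormal ℝ (({0} : Set (Fin (m + 1))).restrict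
      (fun _ => u : Fin (m + 1) → EuclideanSpace ℝ (Fin (m + 1)))) := by
    constructor
    · intro i; exact hu
    · intro i j hij; exact absurd (Subsingleton.elim i j) hij
  obtain ⟨b, hb⟩ := horth.exists_orthonormalBasis_extension_of_card_eq hfr
  have hbu : b 0 = u := hb 0 rfl
  -- the coordinate map
  set Φ : EuclideanSpace ℝ (Fin (m + 1)) → ℝ × (Fin m → ℝ) :=
    fun x => (b.repr x 0, fun j => b.repr x j.succ) with hΦ
  -- Φ as a measurable equivalence
  set Φe : EuclideanSpace ℝ (Fin (m + 1)) ≃ᵐ ℝ × (Fin m → ℝ) :=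
    (b.measurableEquiv.trans (MeasurableEquiv.toLp 2 (Fin (m + 1) → ℝ)).symm).trans
      (MeasurableEquiv.piFinSuccAbove (fun _ : Fin (m + 1) => ℝ) 0) with hΦe
  have hΦefun : ⇑Φe = Φ := by
    funext x
    simp only [hΦe, hΦ, MeasurableEquiv.trans_apply, MeasurableEquiv.piFinSuccAbove,
      MeasurableEquiv.coe_mk, Fin.insertNthEquiv, Equiv.coe_fn_symm_mk]
    rfl
  have hΦpres : MeasurePreserving Φe volume volume :=
    ((volume_preserving_piFinSuccAbove (fun _ : Fin (m + 1) => ℝ) 0).comp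
      (EuclideanSpace.volume_preserving_symm_measurableEquiv_toLp (Fin (m + 1)))).comp
      b.measurePreserving_measurableEquiv
  have himg : ∀ X : Set (EuclideanSpace ℝ (Fin (m + 1))), MeasurableSet X →
      volume (Φ '' X) = volume X := by
    intro X hX
    rw [← hΦefun, MeasurableEquiv.image_eq_preimage_symm]
    exact (hΦpres.symm Φe).measure_preimage hX.nullMeasurableSet
  -- linearity of Φ
  have hΦadd : ∀ x y₀, Φ (x + y₀) = Φ x + Φ y₀ := by
    intro x y₀
    simp only [hΦ, map_add]
    rfl
  have hΦsmul : ∀ (c : ℝ) x, Φ (c • x) = c • Φ x := by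
    intro c x
    simp only [hΦ, _root_.map_smul]
    rfl
  -- images and their properties
  have hcoord : Continuous fun x : EuclideanSpace ℝ (Fin (m + 1)) => (fun i => b.repr x i : Fin (m + 1) → ℝ) :=
    (PiLp.continuous_ofLp 2 fun _ : Fin (m + 1) => ℝ).comp b.repr.continuous
  have hΦcont : Continuous Φ := by
    rw [hΦ]
    exact Continuous.prodMk ((continuous_apply (0 : Fin (m + 1))).comp hcoord)
      (continuous_pi fun j => (continuous_apply (j.succ)).comp hcoord)
  set A₀ := Φ '' C₀ with hA₀def
  set A₁ := Φ '' C₁ with hA₁def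
  have hA0cp : IsCompact A₀ := h0cp.image hΦcont
  have hA1cp : IsCompact A₁ := h1cp.image hΦcont
  have imcv : ∀ C : Set (EuclideanSpace ℝ (Fin (m + 1))), Convex ℝ C → Convex ℝ (Φ '' C) := by
    rintro C hC z₁ ⟨x₁, hx₁, rfl⟩ z₂ ⟨x₂, hx₂, rfl⟩ a c ha hc hac
    refine ⟨a • x₁ + c • x₂, hC hx₁ hx₂ ha hc hac, ?_⟩
    rw [hΦadd, hΦsmul, hΦsmul]
  have hA0cv := imcv C₀ h0cv
  have hA1cv := imcv C₁ h1cv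
  have hsnd : ∀ x : EuclideanSpace ℝ (Fin (m + 1)), (Φ (x - ⟪x, u⟫ • u)).2 = (Φ x).2 := by
    intro x
    funext j
    have hzero : b.repr u j.succ = 0 := by
      rw [← hbu, OrthonormalBasis.repr_self]
      simp [EuclideanSpace.single_apply, Fin.succ_ne_zero j]
    simp only [hΦ, map_sub, _root_.map_smul]
    simp [hzero]
  have hproj2 : Prod.snd '' A₀ = Prod.snd '' A₁ := by
    have key : ∀ C : Set (EuclideanSpace ℝ (Fin (m + 1))),
        (fun x : EuclideanSpace ℝ (Fin (m + 1)) => x - ⟪x, u⟫ • u) '' C = D →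
        Prod.snd '' (Φ '' C) = (fun x => (Φ x).2) '' D := by
      intro C hC
      rw [← hC, Set.image_image, Set.image_image]
      exact Set.image_congr fun x _ => (hsnd x).symm
    rw [hA₀def, hA₁def, key C₀ h0proj, key C₁ h1proj]
  have himage : Φ '' ((1 - l) • C₀ + l • C₁) = (1 - l) • A₀ + l • A₁ := by
    ext z
    constructor
    · rintro ⟨x, hx, rfl⟩
      obtain ⟨p, hp, q, hq, rfl⟩ := hx
      obtain ⟨c₀, hc₀, rfl⟩ := hp
      obtain ⟨c₁, hc₁, rfl⟩ := hq
      rw [hΦadd, hΦsmul, hΦsmul]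
      exact Set.add_mem_add (Set.smul_mem_smul_set (Set.mem_image_of_mem Φ hc₀))
        (Set.smul_mem_smul_set (Set.mem_image_of_mem Φ hc₁))
    · rintro ⟨p, ⟨a₀, ⟨c₀, hc₀, rfl⟩, rfl⟩, q, ⟨a₁, ⟨c₁, hc₁, rfl⟩, rfl⟩, rfl⟩
      refine ⟨(1 - l) • c₀ + l • c₁, ?_, by rw [hΦadd, hΦsmul, hΦsmul]⟩
      exact Set.add_mem_add (Set.smul_mem_smul_set hc₀) (Set.smul_mem_smul_set hc₁)
  have hScp : IsCompact ((1 - l) • C₀ + l • C₁) := (h0cp.smul (1 - l)).add (h1cp.smul l)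
  rw [← himg C₀ h0cp.measurableSet, ← himg C₁ h1cp.measurableSet,
    ← himg _ hScp.measurableSet, himage]
  exact core m A₀ A₁ hA0cp hA1cp hA0cv hA1cv hproj2 l hl0 hl1
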